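/- Let n ≥ 1, let ℓ₁, …, ℓ_{n+1} : ℝ → ℝ be real polynomials of degree at most 1, and let b₁, …, b_{n+1} be real numbers, not all zero. Let U = {λ ∈ ℝ : ℓᵢ(λ) > 0 for all i = 1, …, n+1} and let g(λ) = 1 − Π_{i=1}^{n+1} ℓᵢ(λ)^{bᵢ} (real powers) for λ ∈ U. Then the set of isolated zeros of g in U has at most n + 1 elements. -/

import Mathlib

noncomputable section

open Set

/-- A univariate sheared binomial with `n + 1` positive factors
`ℓᵢ(λ) = cᵢ·λ + dᵢ` (polynomials of degree at most 1) and real exponents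
`bᵢ`, not all zero, has at most `n + 1` isolated zeros on the region where all
factors are positive. -/
theorem sheared_binomial_univariate_bound (n : ℕ) (hn : 1 ≤ n)
    (c d b : Fin (n + 1) → ℝ) (hb : b ≠ 0) :
    {lam : ℝ | (∀ i, 0 < c i * lam + d i) ∧
        (1 - ∏ i, (c i * lam + d i) ^ b i = 0) ∧
        ∃ V ∈ nhds lam, ∀ μ ∈ V, (∀ i, 0 < c i * μ + d i) →
          1 - ∏ i, (c i * μ + d i) ^ b i = 0 → μ = lam}.encard ≤
      (n : ℕ∞) + 1 := by
  classical
  set U : Set ℝ := {x | ∀ i, 0 < c i * x + d i} with hU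
  set S : Set ℝ := {lam : ℝ | (∀ i, 0 < c i * lam + d i) ∧
        (1 - ∏ i, (c i * lam + d i) ^ b i = 0) ∧
        ∃ V ∈ nhds lam, ∀ μ ∈ V, (∀ i, 0 < c i * μ + d i) →
          1 - ∏ i, (c i * μ + d i) ^ b i = 0 → μ = lam} with hS
  -- basic topology of U
  have hUopen : IsOpen U := by
    have : U = ⋂ i, {x : ℝ | 0 < c i * x + d i} := by
      ext x; simp [hU]
    rw [this]
    exact isOpen_iInter_of_finite fun i =>
      isOpen_lt continuous_const (by continuity)
  have hUconv : Convex ℝ U := by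
    intro x hx y hy a a' ha ha' haa'
    intro i
    have hx' := hx i
    have hy' := hy i
    have : c i * (a • x + a' • y) + d i = a * (c i * x + d i) + a' * (c i * y + d i) := by
      simp only [smul_eq_mul]
      linear_combination (-(d i)) * haa'
    rw [this]
    rcases eq_or_lt_of_le ha with h0 | h0
    · have : a' = 1 := by linarith
      rw [← h0, this]; simpa using hy'
    · rcases eq_or_lt_of_le ha' with h1 | h1
      · have : a = 1 := by linarith
        rw [← h1, this]; simpa using hx'
      · positivity
  -- the log function
  set h : ℝ → ℝ := fun x => ∑ i, b i * Real.log (c i * x + d i) with hh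
  have hgh : ∀ x ∈ U, ((1 : ℝ) - ∏ i, (c i * x + d i) ^ b i = 0) ↔ h x = 0 := by
    intro x hx
    have : (∏ i, (c i * x + d i) ^ b i) = Real.exp (h x) := by
      rw [hh, Real.exp_sum]
      refine Finset.prod_congr rfl fun i _ => ?_
      rw [Real.rpow_def_of_pos (hx i), mul_comm]
    rw [this, sub_eq_zero, eq_comm, Real.exp_eq_one_iff]
  -- derivative
  set h' : ℝ → ℝ := fun x => ∑ i, b i * (c i / (c i * x + d i)) with hh'
  have hderiv : ∀ x ∈ U, HasDerivAt h (h' x) x := by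
    intro x hx
    rw [hh, hh']
    refine HasDerivAt.fun_sum fun i _ => ?_
    have hlin : HasDerivAt (fun y : ℝ => c i * y + d i) (c i) x := by
      simpa using ((hasDerivAt_id x).const_mul (c i)).add_const (d i)
    have hlog : HasDerivAt (fun y : ℝ => Real.log (c i * y + d i))
        ((c i * x + d i)⁻¹ * c i) x := by
      have := (Real.hasDerivAt_log (ne_of_gt (hx i))).comp x hlin; exact this
    have := hlog.const_mul (b i)
    convert this using 1
    · rfl
    ring
  -- the polynomial
  set Q : Polynomial ℝ := ∑ i, Polynomial.C (b i * c i) *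
      ∏ j ∈ Finset.univ.erase i, (Polynomial.C (c j) * Polynomial.X + Polynomial.C (d j))
    with hQ
  have hQdeg : Q.natDegree ≤ n := by
    rw [hQ]
    refine Polynomial.natDegree_sum_le_of_forall_le _ _ fun i _ => ?_
    refine (Polynomial.natDegree_C_mul_le _ _).trans ?_
    refine (Polynomial.natDegree_prod_le _ _).trans ?_
    have hle : ∀ j ∈ Finset.univ.erase i,
        (Polynomial.C (c j) * Polynomial.X + Polynomial.C (d j)).natDegree ≤ 1 :=
      fun j _ => Polynomial.natDegree_linear_le
    refine le_trans (Finset.sum_le_sum hle) ?_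
    simp [Finset.card_erase_of_mem]
  have hQeval : ∀ x ∈ U, Q.eval x = h' x * ∏ i, (c i * x + d i) := by
    intro x hx
    rw [hQ, hh']
    simp only [Polynomial.eval_finset_sum, Polynomial.eval_mul, Polynomial.eval_prod,
      Polynomial.eval_add, Polynomial.eval_C, Polynomial.eval_X, Finset.sum_mul]
    refine Finset.sum_congr rfl fun i _ => ?_
    rw [← Finset.mul_prod_erase Finset.univ _ (Finset.mem_univ i)]
    have hne : c i * x + d i ≠ 0 := ne_of_gt (hx i)
    field_simp
    simp only [mul_comm (c _) x]
  -- main argument by contradiction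
  by_contra hlt
  push_neg at hlt
  have h2 : ((n + 2 : ℕ) : ℕ∞) ≤ S.encard := by
    have h1 := Order.add_one_le_of_lt hlt
    calc ((n + 2 : ℕ) : ℕ∞) = (n : ℕ∞) + 1 + 1 := by push_cast; ring
      _ ≤ S.encard := h1
  obtain ⟨t, htS, htcard⟩ := Set.exists_subset_encard_eq h2
  have htfin : t.Finite := Set.finite_of_encard_eq_coe htcard
  have htc : htfin.toFinset.card = n + 2 := by
    have := htfin.encard_eq_coe_toFinset_card
    rw [htcard] at this
    exact_mod_cast this.symm
  set L : Fin (n + 2) → ℝ := fun i => htfin.toFinset.orderEmbOfFin htc i with hL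
  have hLmono : StrictMono L := (htfin.toFinset.orderEmbOfFin htc).strictMono
  have hLS : ∀ i, L i ∈ S := fun i =>
    htS (htfin.mem_toFinset.mp (Finset.orderEmbOfFin_mem _ htc i))
  have hLU : ∀ i, L i ∈ U := fun i => (hLS i).1
  have hLh : ∀ i, h (L i) = 0 := fun i =>
    (hgh _ (hLU i)).mp (hLS i).2.1
  -- Rolle between consecutive points
  have hroots : ∀ i : Fin (n + 1), ∃ x, x ∈ Ioo (L i.castSucc) (L i.succ) ∧
      x ∈ U ∧ Q.eval x = 0 := by
    intro i
    have hab : L i.castSucc < L i.succ := hLmono Fin.castSucc_lt_succ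
    have hIcc : Icc (L i.castSucc) (L i.succ) ⊆ U :=
      hUconv.ordConnected.out (hLU _) (hLU _)
    have hcont : ContinuousOn h (Icc (L i.castSucc) (L i.succ)) := fun x hx =>
      (hderiv x (hIcc hx)).continuousAt.continuousWithinAt
    have heq : h (L i.castSucc) = h (L i.succ) := by rw [hLh, hLh]
    obtain ⟨x, hx, hx0⟩ := exists_hasDerivAt_eq_zero hab hcont heq
      (fun x hx => hderiv x (hIcc (Ioo_subset_Icc_self hx)))
    have hxU : x ∈ U := hIcc (Ioo_subset_Icc_self hx)
    exact ⟨x, hx, hxU, by rw [hQeval x hxU, hx0, zero_mul]⟩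
  choose μ hμIoo hμU hμQ using hroots
  -- the μ's are distinct
  have hμmono : StrictMono μ := by
    intro i j hij
    calc μ i < L i.succ := (hμIoo i).2
      _ ≤ L j.castSucc := hLmono.monotone (Fin.succ_le_castSucc_iff.mpr hij)
      _ < μ j := (hμIoo j).1
  -- Q has n+1 distinct roots but degree ≤ n, so Q = 0
  have hQ0 : Q = 0 := by
    refine Polynomial.eq_zero_of_natDegree_lt_card_of_eval_eq_zero Q hμmono.injective
      hμQ ?_
    simpa using Nat.lt_succ_of_le hQdeg
  -- hence h' = 0 on U
  have hh'0 : ∀ x ∈ U, h' x = 0 := by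
    intro x hx
    have := hQeval x hx
    rw [hQ0] at this
    simp only [Polynomial.eval_zero] at this
    have hprod : (∏ i, (c i * x + d i)) ≠ 0 :=
      ne_of_gt (Finset.prod_pos fun i _ => hx i)
    exact (mul_eq_zero.mp this.symm).resolve_right hprod
  -- so h is constant (= 0) on U
  have hconst : ∀ x ∈ U, h x = 0 := by
    intro x hx
    have := hUconv.norm_image_sub_le_of_norm_hasDerivWithin_le
      (f := h) (f' := h') (fun y hy => (hderiv y hy).hasDerivWithinAt)
      (C := 0) (fun y hy => by simp [hh'0 y hy]) (hLU 0) hx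
    have h0 := hLh 0
    simp only [zero_mul, Real.norm_eq_abs] at this
    have : h x = h (L 0) := by
      have := abs_nonpos_iff.mp (le_of_le_of_eq this rfl)
      linarith [sub_eq_zero.mp this]
    rw [this, h0]
  -- contradict isolation of L 0
  obtain ⟨hU0, hg0, V, hV, hiso⟩ := hLS 0
  have hmem : (V ∩ U) \ {L 0} ∈ nhdsWithin (L 0) {(L 0)}ᶜ := by
    refine Filter.inter_mem ?_ ?_
    · exact nhdsWithin_le_nhds (Filter.inter_mem hV (hUopen.mem_nhds (hLU 0)))
    · exact self_mem_nhdsWithin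
  obtain ⟨y, ⟨hyV, hyU⟩, hyne⟩ := Filter.nonempty_of_mem hmem
  have : y = L 0 := hiso y hyV hyU ((hgh y hyU).mpr (hconst y hyU))
  exact hyne this
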